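/- arXiv:2503.00798 — 3 statements merged into one kernel-verified Lean document; each statement's English description precedes it below -/
import Mathlib

section
/- Let G be a K_{2,3}-induced-minor-free graph, r a vertex, and H the output of the cluster-rewiring algorithm on (G, r). Then for every edge xy of G with dist_G(r,x) = dist_G(r,y), we have dist_H(x,y) ≤ 5. -/
open SimpleGraph

namespace Paper

variable {V : Type}

/-- `u` and `v` are connected in `G` after deleting the vertex set `B`. -/
def ConnOutside (G : SimpleGraph V) (B : Set V) (u v : V) : Prop :=
  ∃ (hu : u ∈ Bᶜ) (hv : v ∈ Bᶜ), (G.induce Bᶜ).Reachable ⟨u, hu⟩ ⟨v, hv⟩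

/-- `C` is an `(a,b)`-cutset of `G`. -/
def IsSep (G : SimpleGraph V) (a b : V) (C : Set V) : Prop :=
  a ∉ C ∧ b ∉ C ∧ ¬ ConnOutside G C a b

/-- `C` is a minimal `(a,b)`-cutset of `G`. -/
def IsMinSep (G : SimpleGraph V) (a b : V) (C : Set V) : Prop :=
  IsSep G a b C ∧ ∀ C' ⊂ C, ¬ IsSep G a b C'

/-- `S` is a cluster of the layering partition of `G` rooted at `r`, at level `k`:
a maximal set of vertices at distance exactly `k` from `r`, any two of which are
connected in `G` minus the ball of radius `k-1` around `r`. -/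
def IsCluster (G : SimpleGraph V) (r : V) (k : ℕ) (S : Set V) : Prop :=
  S.Nonempty ∧ (∀ v ∈ S, G.dist r v = k) ∧
  (∀ u ∈ S, ∀ v ∈ S, ConnOutside G {w | G.dist r w < k} u v) ∧
  ∀ S', S ⊆ S' → (∀ v ∈ S', G.dist r v = k) →
    (∀ u ∈ S', ∀ v ∈ S', ConnOutside G {w | G.dist r w < k} u v) → S' ⊆ S

/-- The parent set of a cluster `S` at level `k`: vertices at distance `k-1` from `r`
adjacent to some vertex of `S`. -/
def parentSet (G : SimpleGraph V) (r : V) (k : ℕ) (S : Set V) : Set V :=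
  {v | G.dist r v = k - 1 ∧ ∃ u ∈ S, G.Adj v u}

/-- `G` has no `K_{2,3}` induced minor. -/
def K23Free (G : SimpleGraph V) : Prop :=
  ¬ ∃ φ : Fin 2 ⊕ Fin 3 → Set V,
      (∀ w, (φ w).Nonempty) ∧ (∀ w, (G.induce (φ w)).Connected) ∧
      (Pairwise fun a b => Disjoint (φ a) (φ b)) ∧
      (∀ a b, a ≠ b →
        ((completeBipartiteGraph (Fin 2) (Fin 3)).Adj a b ↔
          ∃ u ∈ φ a, ∃ v ∈ φ b, G.Adj u v))

/-- `G` contains a theta as an induced subgraph. -/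
def HasTheta (G : SimpleGraph V) : Prop :=
  ∃ (a b : V) (p₁ p₂ p₃ : G.Walk a b),
    p₁.IsPath ∧ p₂.IsPath ∧ p₃.IsPath ∧
    2 ≤ p₁.length ∧ 2 ≤ p₂.length ∧ 2 ≤ p₃.length ∧
    (∀ v, v ∈ p₁.support → v ∈ p₂.support → v = a ∨ v = b) ∧
    (∀ v, v ∈ p₁.support → v ∈ p₃.support → v = a ∨ v = b) ∧
    (∀ v, v ∈ p₂.support → v ∈ p₃.support → v = a ∨ v = b) ∧
    ∀ u v, u ∈ p₁.support ++ p₂.support ++ p₃.support →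
      v ∈ p₁.support ++ p₂.support ++ p₃.support →
      (G.Adj u v ↔ s(u, v) ∈ p₁.edges ++ p₂.edges ++ p₃.edges)

/-- `G` contains a pyramid as an induced subgraph. -/
def HasPyramid (G : SimpleGraph V) : Prop :=
  ∃ (a b₁ b₂ b₃ : V) (p₁ : G.Walk a b₁) (p₂ : G.Walk a b₂) (p₃ : G.Walk a b₃),
    p₁.IsPath ∧ p₂.IsPath ∧ p₃.IsPath ∧
    G.Adj b₁ b₂ ∧ G.Adj b₂ b₃ ∧ G.Adj b₁ b₃ ∧
    1 ≤ p₁.length ∧ 1 ≤ p₂.length ∧ 1 ≤ p₃.length ∧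
    ((2 ≤ p₁.length ∧ 2 ≤ p₂.length) ∨ (2 ≤ p₁.length ∧ 2 ≤ p₃.length) ∨
      (2 ≤ p₂.length ∧ 2 ≤ p₃.length)) ∧
    (∀ v, v ∈ p₁.support → v ∈ p₂.support → v = a) ∧
    (∀ v, v ∈ p₁.support → v ∈ p₃.support → v = a) ∧
    (∀ v, v ∈ p₂.support → v ∈ p₃.support → v = a) ∧
    ∀ u v, u ∈ p₁.support ++ p₂.support ++ p₃.support →
      v ∈ p₁.support ++ p₂.support ++ p₃.support →
      (G.Adj u v ↔ s(u, v) ∈ p₁.edges ++ p₂.edges ++ p₃.edges ∨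
        s(u, v) ∈ [s(b₁, b₂), s(b₂, b₃), s(b₁, b₃)])

/-- The common part of the definition of an (induced) prism in `G`. -/
def PrismWitness (G : SimpleGraph V) (a₁ a₂ a₃ b₁ b₂ b₃ : V)
    (p₁ : G.Walk a₁ b₁) (p₂ : G.Walk a₂ b₂) (p₃ : G.Walk a₃ b₃) : Prop :=
  p₁.IsPath ∧ p₂.IsPath ∧ p₃.IsPath ∧
  G.Adj a₁ a₂ ∧ G.Adj a₂ a₃ ∧ G.Adj a₁ a₃ ∧
  G.Adj b₁ b₂ ∧ G.Adj b₂ b₃ ∧ G.Adj b₁ b₃ ∧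
  (∀ v, v ∈ p₁.support → v ∉ p₂.support) ∧
  (∀ v, v ∈ p₁.support → v ∉ p₃.support) ∧
  (∀ v, v ∈ p₂.support → v ∉ p₃.support) ∧
  ∀ u v, u ∈ p₁.support ++ p₂.support ++ p₃.support →
    v ∈ p₁.support ++ p₂.support ++ p₃.support →
    (G.Adj u v ↔ s(u, v) ∈ p₁.edges ++ p₂.edges ++ p₃.edges ∨
      s(u, v) ∈ [s(a₁, a₂), s(a₂, a₃), s(a₁, a₃), s(b₁, b₂), s(b₂, b₃), s(b₁, b₃)])

/-- `G` contains a prism as an induced subgraph. -/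
def HasPrism (G : SimpleGraph V) : Prop :=
  ∃ (a₁ a₂ a₃ b₁ b₂ b₃ : V) (p₁ : G.Walk a₁ b₁) (p₂ : G.Walk a₂ b₂) (p₃ : G.Walk a₃ b₃),
    PrismWitness G a₁ a₂ a₃ b₁ b₂ b₃ p₁ p₂ p₃

/-- `G` contains a long prism (at least one path of length ≥ 2) as an induced subgraph. -/
def HasLongPrism (G : SimpleGraph V) : Prop :=
  ∃ (a₁ a₂ a₃ b₁ b₂ b₃ : V) (p₁ : G.Walk a₁ b₁) (p₂ : G.Walk a₂ b₂) (p₃ : G.Walk a₃ b₃),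
    PrismWitness G a₁ a₂ a₃ b₁ b₂ b₃ p₁ p₂ p₃ ∧
    (2 ≤ p₁.length ∨ 2 ≤ p₂.length ∨ 2 ≤ p₃.length)

/-- `c` is an induced cycle (hole when length ≥ 4) of `G`. -/
def IsInducedCycle (G : SimpleGraph V) {v : V} (c : G.Walk v v) : Prop :=
  c.IsCycle ∧ ∀ x ∈ c.support, ∀ y ∈ c.support, (G.Adj x y ↔ s(x, y) ∈ c.edges)

/-- `p` is an induced path of `G`. -/
def IsInducedPath (G : SimpleGraph V) {a b : V} (p : G.Walk a b) : Prop :=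
  p.IsPath ∧ ∀ u ∈ p.support, ∀ v ∈ p.support, (G.Adj u v ↔ s(u, v) ∈ p.edges)

/-- `G` contains a wheel: a hole together with a vertex having ≥ 3 neighbours on it. -/
def HasWheel (G : SimpleGraph V) : Prop :=
  ∃ (v x : V) (c : G.Walk v v), IsInducedCycle G c ∧ 4 ≤ c.length ∧ x ∉ c.support ∧
    ∃ y₁ y₂ y₃, y₁ ≠ y₂ ∧ y₁ ≠ y₃ ∧ y₂ ≠ y₃ ∧
      y₁ ∈ c.support ∧ y₂ ∈ c.support ∧ y₃ ∈ c.support ∧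
      G.Adj x y₁ ∧ G.Adj x y₂ ∧ G.Adj x y₃

/-- A sector of a wheel with rim `c` and centre `x`: a path contained in the rim whose
end-vertices are neighbours of `x` and whose internal vertices are not. -/
def IsSector (G : SimpleGraph V) {v : V} (c : G.Walk v v) (x : V) {s t : V}
    (q : G.Walk s t) : Prop :=
  q.IsPath ∧ (∀ e ∈ q.edges, e ∈ c.edges) ∧ G.Adj x s ∧ G.Adj x t ∧
  ∀ w ∈ q.support, w ≠ s → w ≠ t → ¬ G.Adj x w

/-- `G` contains a broken wheel: a wheel with at least two sectors of length ≥ 2. -/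
def HasBrokenWheel (G : SimpleGraph V) : Prop :=
  ∃ (v x : V) (c : G.Walk v v), IsInducedCycle G c ∧ 4 ≤ c.length ∧ x ∉ c.support ∧
    (∃ y₁ y₂ y₃, y₁ ≠ y₂ ∧ y₁ ≠ y₃ ∧ y₂ ≠ y₃ ∧
      y₁ ∈ c.support ∧ y₂ ∈ c.support ∧ y₃ ∈ c.support ∧
      G.Adj x y₁ ∧ G.Adj x y₂ ∧ G.Adj x y₃) ∧
    ∃ (s₁ t₁ s₂ t₂ : V) (q₁ : G.Walk s₁ t₁) (q₂ : G.Walk s₂ t₂),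
      IsSector G c x q₁ ∧ IsSector G c x q₂ ∧ 2 ≤ q₁.length ∧ 2 ≤ q₂.length ∧
      ∀ w, w ∈ q₁.support → w ∈ q₂.support → G.Adj x w

/-- A universally signable graph: no theta, pyramid, prism, or wheel induced subgraph. -/
def UniversallySignable (G : SimpleGraph V) : Prop :=
  ¬ HasTheta G ∧ ¬ HasPyramid G ∧ ¬ HasPrism G ∧ ¬ HasWheel G

/-- `G` has tree-width at most `w`. -/
def TreewidthLe (G : SimpleGraph V) (w : ℕ) : Prop :=
  ∃ (ι : Type) (T : SimpleGraph ι) (bag : ι → Set V),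
    T.IsTree ∧
    (∀ v, ∃ i, v ∈ bag i) ∧
    (∀ u v, G.Adj u v → ∃ i, u ∈ bag i ∧ v ∈ bag i) ∧
    (∀ v, (T.induce {i | v ∈ bag i}).Connected) ∧
    (∀ i, (bag i).ncard ≤ w + 1)

/-- The strong isometric path complexity of `G` is at most `s`: for every vertex `v`,
every isometric path of `G` can be vertex-covered by at most `s` isometric paths
rooted at `v`. -/
def SipcoLe (G : SimpleGraph V) (s : ℕ) : Prop :=
  ∀ v : V, ∀ ⦃x y : V⦄ (p : G.Walk x y), p.length = G.dist x y →
    ∃ n : ℕ, n ≤ s ∧ ∃ (e : Fin n → V) (Q : ∀ i, G.Walk v (e i)),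
      (∀ i, (Q i).length = G.dist v (e i)) ∧
      ∀ z ∈ p.support, ∃ i, z ∈ (Q i).support

/-- The strong isometric path complexity of `G`. -/
noncomputable def sipco (G : SimpleGraph V) : ℕ := sInf {s | SipcoLe G s}

/-- `P` induces exactly two connected components `C₁`, `C₂` in `G`. -/
def SplitsTwo (G : SimpleGraph V) (P C₁ C₂ : Set V) : Prop :=
  C₁ ∪ C₂ = P ∧ Disjoint C₁ C₂ ∧ C₁.Nonempty ∧ C₂.Nonempty ∧
  (G.induce C₁).Connected ∧ (G.induce C₂).Connected ∧
  ∀ u ∈ C₁, ∀ v ∈ C₂, ¬ G.Adj u v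

/-- The star of edges joining each vertex of `D` to `w`. -/
def starEdges (w : V) (D : Set V) : Set (Sym2 V) := {e | ∃ v ∈ D, e = s(v, w)}

/-- Vertices of `S` with a `G`-neighbour in `C`. -/
def Dset (G : SimpleGraph V) (S C : Set V) : Set V := {u ∈ S | ∃ v ∈ C, G.Adj u v}

/-- Admissible edge sets `E` produced by Algorithm 1 when processing a cluster `S`
with parent set `P`. -/
def ClusterEdges (G : SimpleGraph V) (S P : Set V) (E : Set (Sym2 V)) : Prop :=
  ((G.induce P).Connected ∧ ∃ w ∈ P, E = starEdges w S) ∨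
  ∃ C₁ C₂, SplitsTwo G P C₁ C₂ ∧ ∃ w₁ ∈ C₁, ∃ w₂ ∈ C₂,
    ((Dset G S C₁ ∩ Dset G S C₂ = ∅ ∧
       ((¬ (∃ u ∈ Dset G S C₁, ∃ v ∈ Dset G S C₂, G.Adj u v) ∧
          E = starEdges w₁ (Dset G S C₁) ∪ starEdges w₂ (Dset G S C₂)) ∨
        (∃ u ∈ Dset G S C₁, ∃ v ∈ Dset G S C₂, G.Adj u v ∧
          E = starEdges w₁ (Dset G S C₁) ∪ starEdges w₂ (Dset G S C₂) ∪ {s(u, v)})))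
     ∨
     ((Dset G S C₁ ∩ Dset G S C₂).Nonempty ∧
       ∃ u ∈ Dset G S C₁ ∩ Dset G S C₂,
         E = starEdges w₁ (Dset G S C₁) ∪
             starEdges w₂ (Dset G S C₂ \ Dset G S C₁) ∪ {s(u, w₂)}))

/-- `H` is a possible output of the cluster-rewiring algorithm (Algorithm 1) on `(G, r)`. -/
def IsAlgoOutput (G : SimpleGraph V) (r : V) (H : SimpleGraph V) : Prop :=
  ∃ f : Set V → Set (Sym2 V),
    (∀ S k, 1 ≤ k → IsCluster G r k S → ClusterEdges G S (parentSet G r k S) (f S)) ∧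
    H.edgeSet = ⋃ S ∈ {S : Set V | ∃ k, 1 ≤ k ∧ IsCluster G r k S}, f S

/-- The type of clusters of the layering partition of `G` rooted at `r`. -/
def ClusterType (G : SimpleGraph V) (r : V) : Type := {S : Set V // ∃ k, IsCluster G r k S}

/-- The layering tree: clusters, adjacent when `G` has an edge between them. -/
def layeringTree (G : SimpleGraph V) (r : V) : SimpleGraph (ClusterType G r) :=
  SimpleGraph.fromRel (fun S T => ∃ u ∈ S.1, ∃ v ∈ T.1, G.Adj u v)

/-- `A` is a connected component of `G - C`. -/
def IsCompOf (G : SimpleGraph V) (C A : Set V) : Prop :=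
  A.Nonempty ∧ Disjoint A C ∧ (G.induce A).Connected ∧
  ∀ u ∈ A, ∀ v, v ∉ A → v ∉ C → ¬ G.Adj u v


private lemma exists_parent {G : SimpleGraph V} {r x : V} (h : G.Reachable r x)
    (hk : 1 ≤ G.dist r x) : ∃ p, G.Adj p x ∧ G.dist r p = G.dist r x - 1 := by
  obtain ⟨w, hw⟩ := h.exists_walk_length_eq_dist
  obtain ⟨wr, hlen⟩ : ∃ wr : G.Walk x r, wr.length = G.dist r x :=
    ⟨w.reverse, by simp [hw]⟩
  cases wr with
  | nil => simp [SimpleGraph.dist_self] at hk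
  | @cons _ z _ hadj q =>
    refine ⟨z, hadj.symm, ?_⟩
    simp only [SimpleGraph.Walk.length_cons] at hlen
    have h1 : G.dist r z ≤ G.dist r x - 1 := by
      have := SimpleGraph.dist_le q.reverse
      simp only [SimpleGraph.Walk.length_reverse] at this
      omega
    have h2 : G.dist r x ≤ G.dist r z + 1 := by
      have hrz : G.Reachable r z := h.trans (SimpleGraph.Adj.reachable hadj)
      obtain ⟨wz, hwz⟩ := hrz.exists_walk_length_eq_dist
      have := SimpleGraph.dist_le (wz.append (SimpleGraph.Walk.cons hadj.symm SimpleGraph.Walk.nil))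
      simp [hwz] at this
      omega
    omega

private lemma exists_cluster {G : SimpleGraph V} {r x y : V} (hxy : G.Adj x y)
    (hdy : G.dist r y = G.dist r x) :
    ∃ S, IsCluster G r (G.dist r x) S ∧ x ∈ S ∧ y ∈ S := by
  set k := G.dist r x with hk
  set B : Set V := {w | G.dist r w < k} with hB
  have hxB : x ∈ Bᶜ := by simp [hB]; exact le_rfl
  have hyB : y ∈ Bᶜ := by simp [hB, hdy]
  refine ⟨{v | G.dist r v = k ∧ ConnOutside G B x v}, ⟨⟨x, rfl, hxB, hxB, .refl _⟩,
      fun v hv => hv.1, ?_, ?_⟩, ⟨rfl, hxB, hxB, .refl _⟩,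
      ⟨hdy, hxB, hyB, SimpleGraph.Adj.reachable (by exact hxy)⟩⟩
  · rintro u ⟨hu, hxu1, hu2, Ru⟩ v ⟨hv, hxv1, hv2, Rv⟩
    exact ⟨hu2, hv2, Ru.symm.trans Rv⟩
  · intro S' hsub hd' hconn' v hv
    exact ⟨hd' v hv, hconn' x (hsub ⟨rfl, hxB, hxB, .refl _⟩) v hv⟩

private lemma dist_chain2 {H : SimpleGraph V} {x y w : V} (h1 : H.Adj x w)
    (h2 : H.Adj y w) : H.dist x y ≤ 5 := by
  have := SimpleGraph.dist_le (SimpleGraph.Walk.cons h1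
    (SimpleGraph.Walk.cons h2.symm SimpleGraph.Walk.nil))
  simp at this; omega

private lemma dist_chain4 {H : SimpleGraph V} {x a b c y : V} (h1 : H.Adj x a)
    (h2 : H.Adj a b) (h3 : H.Adj b c) (h4 : H.Adj c y) : H.dist x y ≤ 5 := by
  have := SimpleGraph.dist_le (SimpleGraph.Walk.cons h1 (SimpleGraph.Walk.cons h2
    (SimpleGraph.Walk.cons h3 (SimpleGraph.Walk.cons h4 SimpleGraph.Walk.nil))))
  simp at this; omega

private lemma dist_chain5 {H : SimpleGraph V} {x a b c d y : V} (h1 : H.Adj x a)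
    (h2 : H.Adj a b) (h3 : H.Adj b c) (h4 : H.Adj c d) (h5 : H.Adj d y) :
    H.dist x y ≤ 5 := by
  have := SimpleGraph.dist_le (SimpleGraph.Walk.cons h1 (SimpleGraph.Walk.cons h2
    (SimpleGraph.Walk.cons h3 (SimpleGraph.Walk.cons h4
      (SimpleGraph.Walk.cons h5 SimpleGraph.Walk.nil)))))
  simp at this; omega

theorem stmt10 {V : Type} [Fintype V] (G : SimpleGraph V) (hG : G.Connected)
    (hfree : K23Free G) (r : V) (H : SimpleGraph V) (hH : IsAlgoOutput G r H)
    (x y : V) (hxy : G.Adj x y) (hd : G.dist r x = G.dist r y) :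
    H.dist x y ≤ 5 := by
  have hk1 : 1 ≤ G.dist r x := by
    rcases Nat.eq_zero_or_pos (G.dist r x) with h0 | h
    · exfalso
      have hx0 : r = x := ((hG.preconnected r x).dist_eq_zero_iff).mp h0
      have hy0 : r = y := ((hG.preconnected r y).dist_eq_zero_iff).mp (by omega)
      exact hxy.ne (hx0 ▸ hy0 ▸ rfl)
    · omega
  obtain ⟨S, hS, hxS, hyS⟩ := exists_cluster hxy hd.symm
  obtain ⟨f, hf, hHE⟩ := hH
  have hCE := hf S (G.dist r x) hk1 hS
  have hsub : f S ⊆ H.edgeSet := by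
    rw [hHE]
    intro e he
    exact Set.mem_biUnion ⟨G.dist r x, hk1, hS⟩ he
  have key : ∀ a b : V, s(a, b) ∈ f S → H.Adj a b := fun a b h =>
    (H.mem_edgeSet).1 (hsub h)
  rcases hCE with ⟨-, w, -, hE⟩ | ⟨C₁, C₂, hsplit, w₁, hw₁, w₂, hw₂, hcase⟩
  · exact dist_chain2 (key x w (hE ▸ ⟨x, hxS, rfl⟩)) (key y w (hE ▸ ⟨y, hyS, rfl⟩))
  · -- every vertex of S is in D₁ ∪ D₂
    have hmem : ∀ z ∈ S, z ∈ Dset G S C₁ ∨ z ∈ Dset G S C₂ := by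
      intro z hz
      have hdz : G.dist r z = G.dist r x := hS.2.1 z hz
      obtain ⟨p, hpz, hpd⟩ := exists_parent (hG.preconnected r z) (by omega)
      have hpP : p ∈ parentSet G r (G.dist r x) S := ⟨by omega, z, hz, hpz⟩
      have : p ∈ C₁ ∪ C₂ := by rw [hsplit.1]; exact hpP
      rcases this with hp | hp
      · exact Or.inl ⟨hz, p, hp, hpz.symm⟩
      · exact Or.inr ⟨hz, p, hp, hpz.symm⟩
    rcases hcase with ⟨hdisj, hsubcase⟩ | ⟨-, u, hu, hE⟩
    · rcases hsubcase with ⟨hnoedge, hE⟩ | ⟨u, hu1, v, hv2, huv, hE⟩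
      · -- no edge between D₁ and D₂
        rcases hmem x hxS with hx1 | hx2 <;> rcases hmem y hyS with hy1 | hy2
        · exact dist_chain2 (key x w₁ (hE ▸ Or.inl ⟨x, hx1, rfl⟩))
            (key y w₁ (hE ▸ Or.inl ⟨y, hy1, rfl⟩))
        · exact absurd ⟨x, hx1, y, hy2, hxy⟩ hnoedge
        · exact absurd ⟨y, hy1, x, hx2, hxy.symm⟩ hnoedge
        · exact dist_chain2 (key x w₂ (hE ▸ Or.inr ⟨x, hx2, rfl⟩))
            (key y w₂ (hE ▸ Or.inr ⟨y, hy2, rfl⟩))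
      · -- one extra edge s(u, v), u ∈ D₁, v ∈ D₂
        have kxw₁ : ∀ z, z ∈ Dset G S C₁ → H.Adj z w₁ := fun z hz =>
          key z w₁ (hE ▸ Or.inl (Or.inl ⟨z, hz, rfl⟩))
        have kxw₂ : ∀ z, z ∈ Dset G S C₂ → H.Adj z w₂ := fun z hz =>
          key z w₂ (hE ▸ Or.inl (Or.inr ⟨z, hz, rfl⟩))
        have kuv : H.Adj u v := key u v (hE ▸ Or.inr rfl)
        rcases hmem x hxS with hx1 | hx2 <;> rcases hmem y hyS with hy1 | hy2
        · exact dist_chain2 (kxw₁ x hx1) (kxw₁ y hy1)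
        · exact dist_chain5 (kxw₁ x hx1) (kxw₁ u hu1).symm kuv (kxw₂ v hv2)
            (kxw₂ y hy2).symm
        · exact dist_chain5 (kxw₂ x hx2) (kxw₂ v hv2).symm kuv.symm (kxw₁ u hu1)
            (kxw₁ y hy1).symm
        · exact dist_chain2 (kxw₂ x hx2) (kxw₂ y hy2)
    · -- D₁ ∩ D₂ nonempty, u ∈ D₁ ∩ D₂
      have kxw₁ : ∀ z, z ∈ Dset G S C₁ → H.Adj z w₁ := fun z hz =>
        key z w₁ (hE ▸ Or.inl (Or.inl ⟨z, hz, rfl⟩))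
      have kxw₂ : ∀ z, z ∈ Dset G S C₂ \ Dset G S C₁ → H.Adj z w₂ := fun z hz =>
        key z w₂ (hE ▸ Or.inl (Or.inr ⟨z, hz, rfl⟩))
      have kuw₂ : H.Adj u w₂ := key u w₂ (hE ▸ Or.inr rfl)
      have kuw₁ : H.Adj u w₁ := kxw₁ u hu.1
      by_cases hx1 : x ∈ Dset G S C₁ <;> by_cases hy1 : y ∈ Dset G S C₁
      · exact dist_chain2 (kxw₁ x hx1) (kxw₁ y hy1)
      · have hy2 : y ∈ Dset G S C₂ \ Dset G S C₁ :=
          ⟨(hmem y hyS).resolve_left hy1, hy1⟩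
        exact dist_chain4 (kxw₁ x hx1) kuw₁.symm kuw₂ (kxw₂ y hy2).symm
      · have hx2 : x ∈ Dset G S C₂ \ Dset G S C₁ :=
          ⟨(hmem x hxS).resolve_left hx1, hx1⟩
        exact dist_chain4 (kxw₂ x hx2) kuw₂.symm kuw₁ (kxw₁ y hy1).symm
      · have hx2 : x ∈ Dset G S C₂ \ Dset G S C₁ :=
          ⟨(hmem x hxS).resolve_left hx1, hx1⟩
        have hy2 : y ∈ Dset G S C₂ \ Dset G S C₁ :=
          ⟨(hmem y hyS).resolve_left hy1, hy1⟩
        exact dist_chain2 (kxw₂ x hx2) (kxw₂ y hy2)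

end Paper
end

section
/- Let G be a K_{2,3}-induced-minor-free graph, r a vertex, and H the output of the cluster-rewiring algorithm on (G, r). Then for every edge xy of G, dist_H(x,y) ≤ 16. -/
open SimpleGraph

namespace Paper

variable {V : Type}

section StretchHelpers

variable {G : SimpleGraph V}

lemma reach_of_walk {A : Set V} {u v : V} (p : G.Walk u v) :
    (∀ z ∈ p.support, z ∈ A) → ∀ (hu : u ∈ A) (hv : v ∈ A),
    (G.induce A).Reachable ⟨u, hu⟩ ⟨v, hv⟩ := by
  induction p with
  | nil => intro _ hu hv; exact Reachable.refl _
  | @cons a b c h q ih =>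
    intro hs hu hv
    have hb : b ∈ A := hs b (by simp)
    exact (SimpleGraph.Adj.reachable (show (G.induce A).Adj ⟨a, hu⟩ ⟨b, hb⟩ from h)).trans
      (ih (fun z hz => hs z (by simp [hz])) hb hv)

lemma walk_supp_of_induce {A : Set V} {a b : A} (p : (G.induce A).Walk a b) :
    ∃ q : G.Walk a.1 b.1, ∀ z ∈ q.support, z ∈ A := by
  induction p with
  | nil => exact ⟨SimpleGraph.Walk.nil, by simp⟩
  | @cons a c b h q ih =>
    obtain ⟨q', hq'⟩ := ih
    refine ⟨SimpleGraph.Walk.cons h q', ?_⟩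
    intro z hz
    rcases (List.mem_cons.mp hz : z = a.1 ∨ z ∈ q'.support) with rfl | hz
    · exact a.2
    · exact hq' z hz

lemma ConnOutside.symm' {B : Set V} {u v : V} (h : ConnOutside G B u v) :
    ConnOutside G B v u := by
  obtain ⟨hu, hv, hr⟩ := h
  exact ⟨hv, hu, hr.symm⟩

lemma ConnOutside.trans' {B : Set V} {u v w : V} (h1 : ConnOutside G B u v)
    (h2 : ConnOutside G B v w) : ConnOutside G B u w := by
  obtain ⟨hu, hv, r1⟩ := h1
  obtain ⟨hv', hw, r2⟩ := h2
  exact ⟨hu, hw, r1.trans r2⟩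

lemma connOutside_of_adj {B : Set V} {u v : V} (hu : u ∈ Bᶜ) (hv : v ∈ Bᶜ) (h : G.Adj u v) :
    ConnOutside G B u v :=
  ⟨hu, hv, SimpleGraph.Adj.reachable (show (G.induce Bᶜ).Adj ⟨u, hu⟩ ⟨v, hv⟩ from h)⟩

/-- The layering cluster of `v`. -/
def cls (G : SimpleGraph V) (r v : V) : Set V :=
  {u | G.dist r u = G.dist r v ∧ ConnOutside G {w | G.dist r w < G.dist r v} v u}

lemma mem_outside {G : SimpleGraph V} {r z : V} {c : ℕ} (h : ¬ G.dist r z < c) :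
    z ∈ ({w | G.dist r w < c} : Set V)ᶜ := h

lemma self_mem_cls (G : SimpleGraph V) (r v : V) : v ∈ cls G r v :=
  ⟨rfl, ⟨mem_outside (lt_irrefl _), mem_outside (lt_irrefl _), Reachable.refl _⟩⟩

lemma isCluster_cls (G : SimpleGraph V) (r v : V) :
    IsCluster G r (G.dist r v) (cls G r v) := by
  refine ⟨⟨v, self_mem_cls G r v⟩, fun u hu => hu.1,
    fun a ha b hb => (ConnOutside.symm' ha.2).trans' hb.2, ?_⟩
  intro S' hsub hd hc s hs
  exact ⟨hd s hs, hc v (hsub (self_mem_cls G r v)) s hs⟩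

lemma exists_parent_s11 (hG : G.Connected) {r v : V} {k : ℕ} (hd : G.dist r v = k) (hk : 1 ≤ k) :
    ∃ z, G.Adj z v ∧ G.dist r z = k - 1 := by
  obtain ⟨p, hp⟩ := (hG.preconnected r v).exists_walk_length_eq_dist
  have hvr : v ≠ r := by
    rintro rfl
    rw [SimpleGraph.dist_self] at hd
    omega
  obtain ⟨z, hadj, q, hq⟩ := SimpleGraph.Walk.exists_eq_cons_of_ne hvr p.reverse
  have hlen : q.length = k - 1 := by
    have h1 := congrArg SimpleGraph.Walk.length hq
    rw [SimpleGraph.Walk.length_reverse, hp, hd] at h1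
    simp [SimpleGraph.Walk.length_cons] at h1
    omega
  have h1 : G.dist r z ≤ k - 1 := by
    have := SimpleGraph.dist_le q.reverse
    rwa [SimpleGraph.Walk.length_reverse, hlen] at this
  obtain ⟨q2, hq2⟩ := (hG.preconnected r z).exists_walk_length_eq_dist
  have h2 : G.dist r v ≤ G.dist r z + 1 := by
    have := SimpleGraph.dist_le (q2.concat hadj.symm)
    rwa [SimpleGraph.Walk.length_concat, hq2] at this
  exact ⟨z, hadj.symm, by omega⟩

lemma dist_adj_le (hG : G.Connected) {r x y : V} (h : G.Adj x y) :
    G.dist r y ≤ G.dist r x + 1 := by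
  obtain ⟨p, hp⟩ := (hG.preconnected r x).exists_walk_length_eq_dist
  have := SimpleGraph.dist_le (p.concat h)
  rwa [SimpleGraph.Walk.length_concat, hp] at this

lemma stay {D₁ D₂ : Set V} (hnc : ¬ ∃ u ∈ D₁, ∃ v ∈ D₂, G.Adj u v) :
    ∀ {a b : V} (p : G.Walk a b), (∀ z ∈ p.support, z ∈ D₁ ∪ D₂) → a ∈ D₁ → b ∈ D₁ := by
  intro a b p
  induction p with
  | nil => intro _ ha; exact ha
  | @cons a c b h q ih =>
    intro hs ha
    have hc : c ∈ D₁ ∪ D₂ := hs c (by simp)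
    rcases hc with hc | hc
    · exact ih (fun z hz => hs z (by simp [hz])) hc
    · exact absurd ⟨a, ha, c, hc, h⟩ hnc

lemma key (G : SimpleGraph V) (hG : G.Connected) (r : V) (H : SimpleGraph V)
    (f : Set V → Set (Sym2 V))
    (hf : ∀ S k, 1 ≤ k → IsCluster G r k S → ClusterEdges G S (parentSet G r k S) (f S))
    (hE : H.edgeSet = ⋃ S ∈ {S : Set V | ∃ k, 1 ≤ k ∧ IsCluster G r k S}, f S)
    (x y : V) (hxy : G.Adj x y) (hle : G.dist r y ≤ G.dist r x) :
    H.dist x y ≤ 16 := by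
  have hadjH : ∀ (S : Set V) (k : ℕ), 1 ≤ k → IsCluster G r k S →
      ∀ a b : V, s(a, b) ∈ f S → H.Adj a b := by
    intro S k hk hS a b hab
    rw [← SimpleGraph.mem_edgeSet, hE]
    exact Set.mem_biUnion ⟨k, hk, hS⟩ hab
  have hxy1 : G.dist r x ≤ G.dist r y + 1 := dist_adj_le hG hxy.symm
  rcases (by omega : G.dist r y = G.dist r x ∨ G.dist r y + 1 = G.dist r x) with heq | hsucc
  · -- Case A : same level
    by_cases hk : 1 ≤ G.dist r x
    · set k := G.dist r x with hkdef
      set S := cls G r x with hSdef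
      have hS : IsCluster G r k S := isCluster_cls G r x
      have hxS : x ∈ S := self_mem_cls G r x
      have hyS : y ∈ S :=
        ⟨heq, connOutside_of_adj (mem_outside (by omega)) (mem_outside (by omega)) hxy⟩
      have hedge := hadjH S k hk hS
      rcases hf S k hk hS with ⟨hPconn, w, hwP, hfS⟩ | ⟨C₁, C₂, hsplit, w₁, hw₁, w₂, hw₂, hcase⟩
      · have h1 : H.Adj x w := hedge x w (by rw [hfS]; exact ⟨x, hxS, rfl⟩)
        have h2 : H.Adj y w := hedge y w (by rw [hfS]; exact ⟨y, hyS, rfl⟩)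
        exact le_trans (SimpleGraph.dist_le
          (SimpleGraph.Walk.cons h1 (SimpleGraph.Walk.cons h2.symm SimpleGraph.Walk.nil)))
          (by simp)
      · have hmem : ∀ v ∈ S, v ∈ Dset G S C₁ ∪ Dset G S C₂ := by
          intro v hv
          obtain ⟨z, hz, hzd⟩ := exists_parent_s11 hG (hS.2.1 v hv) hk
          have hzP : z ∈ C₁ ∪ C₂ := by
            rw [hsplit.1]; exact ⟨hzd, v, hv, hz⟩
          rcases hzP with h | h
          · exact Or.inl ⟨hv, z, h, hz.symm⟩
          · exact Or.inr ⟨hv, z, h, hz.symm⟩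
        rcases hcase with ⟨hdisj, hsub⟩ | ⟨hne, u, hu, hfS⟩
        · rcases hsub with ⟨hnc, hfS⟩ | ⟨u, hu1, v, hv2, huv, hfS⟩
          · have e1 : ∀ a ∈ Dset G S C₁, H.Adj a w₁ :=
              fun a ha => hedge a w₁ (by rw [hfS]; exact Or.inl ⟨a, ha, rfl⟩)
            have e2 : ∀ a ∈ Dset G S C₂, H.Adj a w₂ :=
              fun a ha => hedge a w₂ (by rw [hfS]; exact Or.inr ⟨a, ha, rfl⟩)
            rcases hmem x hxS with hx1 | hx2 <;> rcases hmem y hyS with hy1 | hy2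
            · exact le_trans (SimpleGraph.dist_le (SimpleGraph.Walk.cons (e1 x hx1)
                (SimpleGraph.Walk.cons (e1 y hy1).symm SimpleGraph.Walk.nil))) (by simp)
            · exact absurd ⟨x, hx1, y, hy2, hxy⟩ hnc
            · exact absurd ⟨y, hy1, x, hx2, hxy.symm⟩ hnc
            · exact le_trans (SimpleGraph.dist_le (SimpleGraph.Walk.cons (e2 x hx2)
                (SimpleGraph.Walk.cons (e2 y hy2).symm SimpleGraph.Walk.nil))) (by simp)
          · have e1 : ∀ a ∈ Dset G S C₁, H.Adj a w₁ :=
              fun a ha => hedge a w₁ (by rw [hfS]; exact Or.inl (Or.inl ⟨a, ha, rfl⟩))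
            have e2 : ∀ a ∈ Dset G S C₂, H.Adj a w₂ :=
              fun a ha => hedge a w₂ (by rw [hfS]; exact Or.inl (Or.inr ⟨a, ha, rfl⟩))
            have euv : H.Adj u v := hedge u v (by rw [hfS]; exact Or.inr rfl)
            rcases hmem x hxS with hx1 | hx2 <;> rcases hmem y hyS with hy1 | hy2
            · exact le_trans (SimpleGraph.dist_le (SimpleGraph.Walk.cons (e1 x hx1)
                (SimpleGraph.Walk.cons (e1 y hy1).symm SimpleGraph.Walk.nil))) (by simp)
            · exact le_trans (SimpleGraph.dist_le (SimpleGraph.Walk.cons (e1 x hx1)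
                (SimpleGraph.Walk.cons (e1 u hu1).symm (SimpleGraph.Walk.cons euv
                (SimpleGraph.Walk.cons (e2 v hv2) (SimpleGraph.Walk.cons (e2 y hy2).symm
                SimpleGraph.Walk.nil)))))) (by simp)
            · exact le_trans (SimpleGraph.dist_le (SimpleGraph.Walk.cons (e2 x hx2)
                (SimpleGraph.Walk.cons (e2 v hv2).symm (SimpleGraph.Walk.cons euv.symm
                (SimpleGraph.Walk.cons (e1 u hu1) (SimpleGraph.Walk.cons (e1 y hy1).symm
                SimpleGraph.Walk.nil)))))) (by simp)
            · exact le_trans (SimpleGraph.dist_le (SimpleGraph.Walk.cons (e2 x hx2)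
                (SimpleGraph.Walk.cons (e2 y hy2).symm SimpleGraph.Walk.nil))) (by simp)
        · have e1 : ∀ a ∈ Dset G S C₁, H.Adj a w₁ :=
            fun a ha => hedge a w₁ (by rw [hfS]; exact Or.inl (Or.inl ⟨a, ha, rfl⟩))
          have e2 : ∀ a ∈ Dset G S C₂ \ Dset G S C₁, H.Adj a w₂ :=
            fun a ha => hedge a w₂ (by rw [hfS]; exact Or.inl (Or.inr ⟨a, ha, rfl⟩))
          have eu2 : H.Adj u w₂ := hedge u w₂ (by rw [hfS]; exact Or.inr rfl)
          have eu1 : H.Adj u w₁ := e1 u hu.1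
          by_cases hx1 : x ∈ Dset G S C₁ <;> by_cases hy1 : y ∈ Dset G S C₁
          · exact le_trans (SimpleGraph.dist_le (SimpleGraph.Walk.cons (e1 x hx1)
              (SimpleGraph.Walk.cons (e1 y hy1).symm SimpleGraph.Walk.nil))) (by simp)
          · have hy2 : y ∈ Dset G S C₂ := by
              rcases hmem y hyS with h | h
              · exact absurd h hy1
              · exact h
            exact le_trans (SimpleGraph.dist_le (SimpleGraph.Walk.cons (e1 x hx1)
              (SimpleGraph.Walk.cons eu1.symm (SimpleGraph.Walk.cons eu2
              (SimpleGraph.Walk.cons (e2 y ⟨hy2, hy1⟩).symm SimpleGraph.Walk.nil))))) (by simp)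
          · have hx2 : x ∈ Dset G S C₂ := by
              rcases hmem x hxS with h | h
              · exact absurd h hx1
              · exact h
            exact le_trans (SimpleGraph.dist_le (SimpleGraph.Walk.cons (e2 x ⟨hx2, hx1⟩)
              (SimpleGraph.Walk.cons eu2.symm (SimpleGraph.Walk.cons eu1
              (SimpleGraph.Walk.cons (e1 y hy1).symm SimpleGraph.Walk.nil))))) (by simp)
          · have hx2 : x ∈ Dset G S C₂ := by
              rcases hmem x hxS with h | h
              · exact absurd h hx1
              · exact h
            have hy2 : y ∈ Dset G S C₂ := by
              rcases hmem y hyS with h | h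
              · exact absurd h hy1
              · exact h
            exact le_trans (SimpleGraph.dist_le (SimpleGraph.Walk.cons (e2 x ⟨hx2, hx1⟩)
              (SimpleGraph.Walk.cons (e2 y ⟨hy2, hy1⟩).symm SimpleGraph.Walk.nil))) (by simp)
    · -- dist r x = 0 : impossible since x = y = r
      have hx0 : G.dist r x = 0 := by omega
      have hy0 : G.dist r y = 0 := by omega
      have h1 : r = x := (hG.dist_eq_zero_iff).mp hx0
      have h2 : r = y := (hG.dist_eq_zero_iff).mp hy0
      exact absurd (h1.symm.trans h2) hxy.ne
  · -- Case B : levels differ by one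
    set k := G.dist r x with hkdef
    have hky : G.dist r y = k - 1 := by omega
    have hk : 1 ≤ k := by omega
    set S := cls G r x with hSdef
    have hS : IsCluster G r k S := isCluster_cls G r x
    have hxS : x ∈ S := self_mem_cls G r x
    have hedge := hadjH S k hk hS
    have hyP : y ∈ parentSet G r k S := ⟨hky, x, hxS, hxy.symm⟩
    by_cases hk2 : 2 ≤ k
    · -- general case
      have hk' : 1 ≤ G.dist r y := by omega
      set S' := cls G r y with hS'def
      have hS' : IsCluster G r (G.dist r y) S' := isCluster_cls G r y
      have hedge' := hadjH S' (G.dist r y) hk' hS'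
      have hPsub : ∀ p ∈ parentSet G r k S, p ∈ S' := by
        intro p hp
        obtain ⟨hpd, u, huS, hpu⟩ := hp
        obtain ⟨hxo, huo, hreach⟩ := huS.2
        obtain ⟨pw⟩ := hreach
        obtain ⟨q, hq⟩ := walk_supp_of_induce pw
        refine ⟨by omega, mem_outside (by omega), mem_outside (by omega), ?_⟩
        refine reach_of_walk (SimpleGraph.Walk.cons hxy.symm (q.concat hpu.symm)) ?_ _ _
        intro z hz
        rw [SimpleGraph.Walk.support_cons] at hz
        rcases List.mem_cons.mp hz with rfl | hz
        · exact mem_outside (by omega)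
        · rw [SimpleGraph.Walk.support_concat] at hz
          rcases List.mem_append.mp hz with hz | hz
          · have h2 : ¬ G.dist r z < G.dist r x := hq z hz
            exact mem_outside (by omega)
          · have hzp : z = p := by simpa using hz
            subst hzp
            exact mem_outside (by omega)
      obtain ⟨Q, w, hQconn, hQsub, hyQ, hwQ, pw0, hpwlen⟩ :
          ∃ (Q : Set V) (w : V), (G.induce Q).Connected ∧
            (∀ a ∈ Q, a ∈ parentSet G r k S) ∧ y ∈ Q ∧ w ∈ Q ∧
            ∃ pw0 : H.Walk x w, pw0.length ≤ 3 := by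
        rcases hf S k hk hS with ⟨hPconn, w, hwP, hfS⟩ | ⟨C₁, C₂, hsplit, w₁, hw₁, w₂, hw₂, hcase⟩
        · exact ⟨parentSet G r k S, w, hPconn, fun a ha => ha, hyP, hwP,
            SimpleGraph.Walk.cons (hedge x w (by rw [hfS]; exact ⟨x, hxS, rfl⟩))
              SimpleGraph.Walk.nil, by simp⟩
        · have hyC : y ∈ C₁ ∪ C₂ := by rw [hsplit.1]; exact hyP
          have hC₁P : ∀ a ∈ C₁, a ∈ parentSet G r k S := by
            intro a ha; rw [← hsplit.1]; exact Or.inl ha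
          have hC₂P : ∀ a ∈ C₂, a ∈ parentSet G r k S := by
            intro a ha; rw [← hsplit.1]; exact Or.inr ha
          rcases hyC with hyC | hyC
          · have hxD1 : x ∈ Dset G S C₁ := ⟨hxS, y, hyC, hxy⟩
            have hxw1 : s(x, w₁) ∈ f S := by
              rcases hcase with ⟨hdisj, hsub⟩ | ⟨hne, u, hu, hfS⟩
              · rcases hsub with ⟨_, hfS⟩ | ⟨u, _, v, _, _, hfS⟩
                · rw [hfS]; exact Or.inl ⟨x, hxD1, rfl⟩
                · rw [hfS]; exact Or.inl (Or.inl ⟨x, hxD1, rfl⟩)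
              · rw [hfS]; exact Or.inl (Or.inl ⟨x, hxD1, rfl⟩)
            exact ⟨C₁, w₁, hsplit.2.2.2.2.1, hC₁P, hyC, hw₁,
              SimpleGraph.Walk.cons (hedge x w₁ hxw1) SimpleGraph.Walk.nil, by simp⟩
          · have hxD2 : x ∈ Dset G S C₂ := ⟨hxS, y, hyC, hxy⟩
            rcases hcase with ⟨hdisj, hsub⟩ | ⟨hne, u, hu, hfS⟩
            · have hxw2 : s(x, w₂) ∈ f S := by
                rcases hsub with ⟨_, hfS⟩ | ⟨u, _, v, _, _, hfS⟩
                · rw [hfS]; exact Or.inr ⟨x, hxD2, rfl⟩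
                · rw [hfS]; exact Or.inl (Or.inr ⟨x, hxD2, rfl⟩)
              exact ⟨C₂, w₂, hsplit.2.2.2.2.2.1, hC₂P, hyC, hw₂,
                SimpleGraph.Walk.cons (hedge x w₂ hxw2) SimpleGraph.Walk.nil, by simp⟩
            · by_cases hxD1 : x ∈ Dset G S C₁
              · have e1 : H.Adj x w₁ :=
                  hedge x w₁ (by rw [hfS]; exact Or.inl (Or.inl ⟨x, hxD1, rfl⟩))
                have eu1 : H.Adj u w₁ :=
                  hedge u w₁ (by rw [hfS]; exact Or.inl (Or.inl ⟨u, hu.1, rfl⟩))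
                have eu2 : H.Adj u w₂ := hedge u w₂ (by rw [hfS]; exact Or.inr rfl)
                exact ⟨C₂, w₂, hsplit.2.2.2.2.2.1, hC₂P, hyC, hw₂,
                  SimpleGraph.Walk.cons e1 (SimpleGraph.Walk.cons eu1.symm
                    (SimpleGraph.Walk.cons eu2 SimpleGraph.Walk.nil)), by simp⟩
              · have hxw2 : s(x, w₂) ∈ f S := by
                  rw [hfS]; exact Or.inl (Or.inr ⟨x, ⟨hxD2, hxD1⟩, rfl⟩)
                exact ⟨C₂, w₂, hsplit.2.2.2.2.2.1, hC₂P, hyC, hw₂,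
                  SimpleGraph.Walk.cons (hedge x w₂ hxw2) SimpleGraph.Walk.nil, by simp⟩
      have hQS' : ∀ a ∈ Q, a ∈ S' := fun a ha => hPsub a (hQsub a ha)
      obtain ⟨qw, hqwlen⟩ : ∃ qw : H.Walk w y, qw.length ≤ 5 := by
        rcases hf S' (G.dist r y) hk' hS' with ⟨hPconn', w'', hw'', hfS'⟩ |
          ⟨C₁, C₂, hsplit', w₁, hw₁, w₂, hw₂, hcase'⟩
        · have h1 : H.Adj w w'' := hedge' w w'' (by rw [hfS']; exact ⟨w, hQS' w hwQ, rfl⟩)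
          have h2 : H.Adj y w'' := hedge' y w'' (by rw [hfS']; exact ⟨y, hQS' y hyQ, rfl⟩)
          exact ⟨SimpleGraph.Walk.cons h1 (SimpleGraph.Walk.cons h2.symm SimpleGraph.Walk.nil),
            by simp⟩
        · have hmem' : ∀ v ∈ S', v ∈ Dset G S' C₁ ∪ Dset G S' C₂ := by
            intro v hv
            obtain ⟨z, hz, hzd⟩ := exists_parent_s11 hG (hS'.2.1 v hv) hk'
            have hzP : z ∈ C₁ ∪ C₂ := by
              rw [hsplit'.1]; exact ⟨hzd, v, hv, hz⟩
            rcases hzP with h | h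
            · exact Or.inl ⟨hv, z, h, hz.symm⟩
            · exact Or.inr ⟨hv, z, h, hz.symm⟩
          have hwS' := hQS' w hwQ
          have hyS' := hQS' y hyQ
          rcases hcase' with ⟨hdisj', hsub'⟩ | ⟨hne', u, hu, hfS'⟩
          · rcases hsub' with ⟨hnc, hfS'⟩ | ⟨u, hu1, v, hv2, huv, hfS'⟩
            · have e1 : ∀ a ∈ Dset G S' C₁, H.Adj a w₁ :=
                fun a ha => hedge' a w₁ (by rw [hfS']; exact Or.inl ⟨a, ha, rfl⟩)
              have e2 : ∀ a ∈ Dset G S' C₂, H.Adj a w₂ :=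
                fun a ha => hedge' a w₂ (by rw [hfS']; exact Or.inr ⟨a, ha, rfl⟩)
              obtain ⟨pq⟩ := hQconn.preconnected ⟨w, hwQ⟩ ⟨y, hyQ⟩
              obtain ⟨q, hq⟩ := walk_supp_of_induce pq
              have hqD : ∀ z ∈ q.support, z ∈ Dset G S' C₁ ∪ Dset G S' C₂ :=
                fun z hz => hmem' z (hQS' z (hq z hz))
              rcases hmem' w hwS' with hw1 | hw2
              · have hy1 : y ∈ Dset G S' C₁ := stay hnc q hqD hw1
                exact ⟨SimpleGraph.Walk.cons (e1 w hw1)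
                  (SimpleGraph.Walk.cons (e1 y hy1).symm SimpleGraph.Walk.nil), by simp⟩
              · have hnc2 : ¬ ∃ a ∈ Dset G S' C₂, ∃ b ∈ Dset G S' C₁, G.Adj a b := by
                  rintro ⟨a, ha, b, hb, hab⟩
                  exact hnc ⟨b, hb, a, ha, hab.symm⟩
                have hqD2 : ∀ z ∈ q.support, z ∈ Dset G S' C₂ ∪ Dset G S' C₁ := by
                  intro z hz
                  rcases hqD z hz with h | h
                  · exact Or.inr h
                  · exact Or.inl h
                have hy2 : y ∈ Dset G S' C₂ := stay hnc2 q hqD2 hw2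
                exact ⟨SimpleGraph.Walk.cons (e2 w hw2)
                  (SimpleGraph.Walk.cons (e2 y hy2).symm SimpleGraph.Walk.nil), by simp⟩
            · have e1 : ∀ a ∈ Dset G S' C₁, H.Adj a w₁ :=
                fun a ha => hedge' a w₁ (by rw [hfS']; exact Or.inl (Or.inl ⟨a, ha, rfl⟩))
              have e2 : ∀ a ∈ Dset G S' C₂, H.Adj a w₂ :=
                fun a ha => hedge' a w₂ (by rw [hfS']; exact Or.inl (Or.inr ⟨a, ha, rfl⟩))
              have euv : H.Adj u v := hedge' u v (by rw [hfS']; exact Or.inr rfl)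
              rcases hmem' w hwS' with hw1 | hw2 <;> rcases hmem' y hyS' with hy1 | hy2
              · exact ⟨SimpleGraph.Walk.cons (e1 w hw1)
                  (SimpleGraph.Walk.cons (e1 y hy1).symm SimpleGraph.Walk.nil), by simp⟩
              · exact ⟨SimpleGraph.Walk.cons (e1 w hw1) (SimpleGraph.Walk.cons (e1 u hu1).symm
                  (SimpleGraph.Walk.cons euv (SimpleGraph.Walk.cons (e2 v hv2)
                  (SimpleGraph.Walk.cons (e2 y hy2).symm SimpleGraph.Walk.nil)))), by simp⟩
              · exact ⟨SimpleGraph.Walk.cons (e2 w hw2) (SimpleGraph.Walk.cons (e2 v hv2).symm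
                  (SimpleGraph.Walk.cons euv.symm (SimpleGraph.Walk.cons (e1 u hu1)
                  (SimpleGraph.Walk.cons (e1 y hy1).symm SimpleGraph.Walk.nil)))), by simp⟩
              · exact ⟨SimpleGraph.Walk.cons (e2 w hw2)
                  (SimpleGraph.Walk.cons (e2 y hy2).symm SimpleGraph.Walk.nil), by simp⟩
          · have e1 : ∀ a ∈ Dset G S' C₁, H.Adj a w₁ :=
              fun a ha => hedge' a w₁ (by rw [hfS']; exact Or.inl (Or.inl ⟨a, ha, rfl⟩))
            have e2 : ∀ a ∈ Dset G S' C₂ \ Dset G S' C₁, H.Adj a w₂ :=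
              fun a ha => hedge' a w₂ (by rw [hfS']; exact Or.inl (Or.inr ⟨a, ha, rfl⟩))
            have eu2 : H.Adj u w₂ := hedge' u w₂ (by rw [hfS']; exact Or.inr rfl)
            have eu1 : H.Adj u w₁ := e1 u hu.1
            by_cases hw1 : w ∈ Dset G S' C₁ <;> by_cases hy1 : y ∈ Dset G S' C₁
            · exact ⟨SimpleGraph.Walk.cons (e1 w hw1)
                (SimpleGraph.Walk.cons (e1 y hy1).symm SimpleGraph.Walk.nil), by simp⟩
            · have hy2 : y ∈ Dset G S' C₂ := by
                rcases hmem' y hyS' with h | h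
                · exact absurd h hy1
                · exact h
              exact ⟨SimpleGraph.Walk.cons (e1 w hw1) (SimpleGraph.Walk.cons eu1.symm
                (SimpleGraph.Walk.cons eu2 (SimpleGraph.Walk.cons (e2 y ⟨hy2, hy1⟩).symm
                SimpleGraph.Walk.nil))), by simp⟩
            · have hw2 : w ∈ Dset G S' C₂ := by
                rcases hmem' w hwS' with h | h
                · exact absurd h hw1
                · exact h
              exact ⟨SimpleGraph.Walk.cons (e2 w ⟨hw2, hw1⟩) (SimpleGraph.Walk.cons eu2.symm
                (SimpleGraph.Walk.cons eu1 (SimpleGraph.Walk.cons (e1 y hy1).symm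
                SimpleGraph.Walk.nil))), by simp⟩
            · have hw2 : w ∈ Dset G S' C₂ := by
                rcases hmem' w hwS' with h | h
                · exact absurd h hw1
                · exact h
              have hy2 : y ∈ Dset G S' C₂ := by
                rcases hmem' y hyS' with h | h
                · exact absurd h hy1
                · exact h
              exact ⟨SimpleGraph.Walk.cons (e2 w ⟨hw2, hw1⟩)
                (SimpleGraph.Walk.cons (e2 y ⟨hy2, hy1⟩).symm SimpleGraph.Walk.nil), by simp⟩
      have hfin := SimpleGraph.dist_le (pw0.append qw)
      rw [SimpleGraph.Walk.length_append] at hfin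
      omega
    · -- k = 1 : y = r
      have hy0 : y = r := by
        have h0 : G.dist r y = 0 := by omega
        exact ((hG.dist_eq_zero_iff).mp h0).symm
      have hPr : ∀ p ∈ parentSet G r k S, p = r := by
        intro p hp
        have h0 : G.dist r p = 0 := by
          have := hp.1
          omega
        exact ((hG.dist_eq_zero_iff).mp h0).symm
      rcases hf S k hk hS with ⟨hPconn, w, hwP, hfS⟩ | ⟨C₁, C₂, hsplit, w₁, hw₁, w₂, hw₂, hcase⟩
      · have h1 : H.Adj x w := hedge x w (by rw [hfS]; exact ⟨x, hxS, rfl⟩)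
        have h1' : H.Adj x y := by rwa [hPr w hwP, ← hy0] at h1
        exact le_trans (SimpleGraph.dist_le
          (SimpleGraph.Walk.cons h1' SimpleGraph.Walk.nil)) (by simp)
      · obtain ⟨c₁, hc₁⟩ := hsplit.2.2.1
        obtain ⟨c₂, hc₂⟩ := hsplit.2.2.2.1
        have h1 : c₁ = r := hPr c₁ (by rw [← hsplit.1]; exact Or.inl hc₁)
        have h2 : c₂ = r := hPr c₂ (by rw [← hsplit.1]; exact Or.inr hc₂)
        have hr1 : r ∈ C₁ := h1 ▸ hc₁
        have hr2 : r ∈ C₂ := h2 ▸ hc₂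
        exact absurd hr2 (Set.disjoint_left.mp hsplit.2.1 hr1)

end StretchHelpers

theorem stmt11 {V : Type} [Fintype V] (G : SimpleGraph V) (hG : G.Connected)
    (hfree : K23Free G) (r : V) (H : SimpleGraph V) (hH : IsAlgoOutput G r H)
    (x y : V) (hxy : G.Adj x y) :
    H.dist x y ≤ 16 := by
  obtain ⟨f, hf, hE⟩ := hH
  rcases le_total (G.dist r y) (G.dist r x) with h | h
  · exact key G hG r H f hf hE x y hxy h
  · rw [SimpleGraph.dist_comm]
    exact key G hG r H f hf hE y x hxy.symm h

end Paper
end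

section
/- Let G be a K_{2,3}-induced-minor-free graph, r a vertex, and H the output of the cluster-rewiring algorithm on (G, r). Then for every edge xy of H, dist_G(x,y) ≤ 4. -/
open SimpleGraph

namespace Paper

variable {V : Type}

section Stmt12Aux

variable {V : Type} {G : SimpleGraph V}

/-- The natural homomorphism from an induced subgraph to the ambient graph. -/
def induceHomVal (G : SimpleGraph V) (s : Set V) : G.induce s →g G :=
  { toFun := Subtype.val, map_rel' := fun {_ _} h => h }

/-- Every vertex of a walk whose support lies in `U` is reachable to the start
of the walk inside `G.induce U`. -/
lemma reach_start_of_mem_support {U : Set V} {a b : V} (t : G.Walk a b)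
    (hsub : ∀ z ∈ t.support, z ∈ U) {x : V} (hx : x ∈ t.support) :
    ∀ (ha : a ∈ U) (hxU : x ∈ U), (G.induce U).Reachable ⟨x, hxU⟩ ⟨a, ha⟩ := by
  induction t with
  | nil =>
    intro ha hxU
    simp only [Walk.support_nil, List.mem_singleton] at hx
    subst hx
    exact Reachable.refl _
  | @cons u c' v h p ih =>
    intro ha hxU
    rw [Walk.support_cons, List.mem_cons] at hx
    rcases hx with rfl | hx
    · exact Reachable.refl _
    · have hc' : c' ∈ U := hsub c' (by rw [Walk.support_cons]; exact List.mem_cons_of_mem _ p.start_mem_support)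
      have hadj : (G.induce U).Adj ⟨c', hc'⟩ ⟨u, ha⟩ := h.symm
      exact ((ih (fun z hz => hsub z (by rw [Walk.support_cons]; exact List.mem_cons_of_mem _ hz)) hx) hc' hxU).trans hadj.reachable

/-- Every vertex at distance `d+1` from `r` has a neighbour at distance `d`. -/
lemma exists_pred (hG : G.Connected) {r v : V} {d : ℕ} (h : G.dist r v = d + 1) :
    ∃ y, G.Adj y v ∧ G.dist r y = d := by
  obtain ⟨p, hp⟩ := hG.exists_walk_length_eq_dist r v
  have hq : ∃ q1 : G.Walk v r, q1.length = d + 1 := ⟨p.reverse, by rw [Walk.length_reverse, hp, h]⟩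
  obtain ⟨q1, hq1⟩ := hq
  cases q1 with
  | nil => rw [Walk.length_nil] at hq1; omega
  | @cons _ y _ hadj q =>
    refine ⟨y, hadj.symm, ?_⟩
    rw [Walk.length_cons] at hq1
    have h1 : G.dist r y ≤ d := by
      have hle := dist_le q.reverse
      rw [Walk.length_reverse] at hle
      omega
    have h2 : G.dist r v ≤ G.dist r y + 1 := by
      have ht := hG.dist_triangle (u := r) (v := y) (w := v)
      have hyv : G.dist y v ≤ 1 := by
        have := dist_le (Walk.cons hadj.symm Walk.nil)
        simpa using this
      omega
    omega

/-- Balls around a vertex induce connected subgraphs. -/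
lemma ball_conn (hG : G.Connected) (r : V) {n : ℕ} (hn : 0 < n) :
    (G.induce {x : V | G.dist r x < n}).Connected := by
  have hr : r ∈ {x : V | G.dist r x < n} := by
    simpa [SimpleGraph.dist_self] using hn
  have key : ∀ (m : ℕ) (x : V) (hx : x ∈ {x : V | G.dist r x < n}), G.dist r x = m →
      (G.induce {x : V | G.dist r x < n}).Reachable ⟨x, hx⟩ ⟨r, hr⟩ := by
    intro m
    induction m with
    | zero =>
      intro x hx h0
      have hrx : r = x := (hG.dist_eq_zero_iff).mp h0
      subst hrx
      exact Reachable.refl _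
    | succ d ih =>
      intro x hx h
      obtain ⟨yy, hyx, hyd⟩ := exists_pred hG h
      have hy : yy ∈ {x : V | G.dist r x < n} := by
        simp only [Set.mem_setOf_eq] at hx ⊢; omega
      have hadj : (G.induce {x : V | G.dist r x < n}).Adj ⟨x, hx⟩ ⟨yy, hy⟩ := hyx.symm
      exact hadj.reachable.trans (ih yy hy hyd)
  rw [connected_iff]
  exact ⟨fun a b => (key _ a.1 a.2 rfl).trans ((key _ b.1 b.2 rfl).symm), ⟨⟨r, hr⟩⟩⟩

/-- Singletons induce connected subgraphs. -/
lemma singleton_induce_connected (G : SimpleGraph V) (v : V) :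
    (G.induce {v}).Connected := by
  rw [connected_iff]
  refine ⟨fun a b => ?_, ⟨⟨v, rfl⟩⟩⟩
  have : a = b := Subtype.ext (a.2.trans b.2.symm)
  rw [this]

/-- The key lemma: two vertices of the parent set of a cluster that are connected
inside a subset `C` of the parent set are at distance at most 3 in `G`
(else `G` has a `K_{2,3}` induced minor). -/
lemma key_lemma (hG : G.Connected) (hfree : K23Free G) {r : V} {k : ℕ} {S : Set V}
    (hS : IsCluster G r k S) {C : Set V} (hCP : C ⊆ parentSet G r k S)
    (hCconn : (G.induce C).Connected) {c w : V} (hc : c ∈ C) (hw : w ∈ C) :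
    G.dist c w ≤ 3 := by
  by_contra hlt
  push_neg at hlt
  have h4 : 4 ≤ G.dist c w := hlt
  have hreach : (G.induce C).Reachable ⟨c, hc⟩ ⟨w, hw⟩ := hCconn.preconnected _ _
  obtain ⟨p, hp⟩ := hreach.exists_walk_length_eq_dist
  have hGle : G.dist c w ≤ p.length := by
    have hh := dist_le (p.map (induceHomVal G C))
    rwa [Walk.length_map] at hh
  have hd4 : 4 ≤ (G.induce C).dist ⟨c, hc⟩ ⟨w, hw⟩ := by omega
  -- distance facts about c and w
  have hcw_ne : c ≠ w := by
    intro h; rw [h, SimpleGraph.dist_self] at h4; omega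
  have hcw_nadj : ¬ G.Adj c w := by
    intro h
    have := SimpleGraph.dist_eq_one_iff_adj.mpr h
    omega
  -- extract the vertex at position 2 on a shortest walk in `G.induce C`
  cases p with
  | nil => rw [Walk.length_nil] at hp; omega
  | @cons _ b₁ _ h1 p1 =>
    cases p1 with
    | nil =>
      rw [Walk.length_cons, Walk.length_nil] at hp; omega
    | @cons _ b₂ _ h2 p2 =>
      rw [Walk.length_cons, Walk.length_cons] at hp
      obtain ⟨m, hmC⟩ := b₂
      have hmc_nadj : ¬ G.Adj c m := by
        intro hadj
        have hadj' : (G.induce C).Adj ⟨c, hc⟩ ⟨m, hmC⟩ := hadj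
        have := dist_le (Walk.cons hadj' p2)
        rw [Walk.length_cons] at this
        omega
      have hmc_ne : m ≠ c := by
        intro h
        subst h
        have hle : (G.induce C).dist ⟨m, hc⟩ ⟨w, hw⟩ ≤ p2.length := dist_le p2
        omega
      have hmw_nadj : ¬ G.Adj m w := by
        intro hadj
        have hadj' : (G.induce C).Adj ⟨m, hmC⟩ ⟨w, hw⟩ := hadj
        have := dist_le (Walk.cons h1 (Walk.cons h2 (Walk.cons hadj' Walk.nil)))
        simp only [Walk.length_cons, Walk.length_nil] at this
        omega
      have hmw_ne : m ≠ w := by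
        intro h
        subst h
        have hle : (G.induce C).dist ⟨c, hc⟩ ⟨m, hw⟩ ≤ 2 := by
          have := dist_le (Walk.cons h1 (Walk.cons h2 Walk.nil))
          simpa using this
        omega
      -- parent-set data
      obtain ⟨hcl, s_c, hscS, hsc_adj⟩ := hCP hc
      obtain ⟨hml, s_m, hsmS, hsm_adj⟩ := hCP hmC
      obtain ⟨hwl, s_w, hswS, hsw_adj⟩ := hCP hw
      set n := G.dist r c with hn
      have hmln : G.dist r m = n := by omega
      have hwln : G.dist r w = n := by omega
      have hn2 : 2 ≤ n := by
        rcases Nat.lt_or_ge n 2 with hlt2 | hge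
        · exfalso
          interval_cases n
          · have h1' : r = c := (hG.dist_eq_zero_iff).mp hn.symm
            have h2' : r = w := (hG.dist_eq_zero_iff).mp hwln
            exact hcw_ne (h1'.symm.trans h2')
          · have h1' : G.Adj r c := SimpleGraph.dist_eq_one_iff_adj.mp hn.symm
            have h2' : G.Adj r w := SimpleGraph.dist_eq_one_iff_adj.mp hwln
            have ht := hG.dist_triangle (u := c) (v := r) (w := w)
            have hcr : G.dist c r ≤ 1 := by
              have := dist_le (Walk.cons h1'.symm Walk.nil); simpa using this
            have hrw : G.dist r w ≤ 1 := by
              have := dist_le (Walk.cons h2' Walk.nil); simpa using this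
            omega
        · exact hge
      have hk1 : k = n + 1 := by omega
      -- walks inside the upper part
      obtain ⟨hu1, hv1, hr1⟩ := hS.2.2.1 s_c hscS s_m hsmS
      obtain ⟨hu2, hv2, hr2⟩ := hS.2.2.1 s_c hscS s_w hswS
      obtain ⟨q1⟩ := hr1
      obtain ⟨q2⟩ := hr2
      set t₁ : G.Walk s_c s_m := q1.map (induceHomVal G _) with ht₁
      set t₂ : G.Walk s_c s_w := q2.map (induceHomVal G _) with ht₂
      set U : Set V := {x : V | x ∈ t₁.support ∨ x ∈ t₂.support} with hUdef
      have hU_level : ∀ x ∈ U, n + 1 ≤ G.dist r x := by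
        intro x hx
        rcases hx with hx | hx
        · replace hx : x ∈ (q1.map (induceHomVal G _)).support := hx
          rw [Walk.support_map, List.mem_map] at hx
          obtain ⟨zz, _, rfl⟩ := hx
          have hz := zz.2
          simp only [Set.mem_compl_iff, Set.mem_setOf_eq, not_lt] at hz
          exact (show n + 1 ≤ G.dist r zz.1 by omega)
        · replace hx : x ∈ (q2.map (induceHomVal G _)).support := hx
          rw [Walk.support_map, List.mem_map] at hx
          obtain ⟨zz, _, rfl⟩ := hx
          have hz := zz.2
          simp only [Set.mem_compl_iff, Set.mem_setOf_eq, not_lt] at hz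
          exact (show n + 1 ≤ G.dist r zz.1 by omega)
      have hsc_mem : s_c ∈ U := Or.inl t₁.start_mem_support
      have hsm_mem : s_m ∈ U := Or.inl t₁.end_mem_support
      have hsw_mem : s_w ∈ U := Or.inr t₂.end_mem_support
      have hU_conn : (G.induce U).Connected := by
        rw [connected_iff]
        refine ⟨?_, ⟨⟨s_c, hsc_mem⟩⟩⟩
        have reachU : ∀ a : {x : V // x ∈ U}, (G.induce U).Reachable a ⟨s_c, hsc_mem⟩ := by
          rintro ⟨xx, hxx⟩
          rcases hxx with h | h
          · exact reach_start_of_mem_support t₁ (fun z hz => Or.inl hz) h hsc_mem (Or.inl h)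
          · exact reach_start_of_mem_support t₂ (fun z hz => Or.inr hz) h hsc_mem (Or.inr h)
        exact fun a b => (reachU a).trans (reachU b).symm
      set A₂ : Set V := {x : V | G.dist r x < n} with hA₂def
      have hA₂_conn : (G.induce A₂).Connected := ball_conn hG r (by omega)
      -- predecessors of the three leaves
      obtain ⟨yc, hyc_adj, hyc_d⟩ := exists_pred hG (show G.dist r c = (n - 1) + 1 by omega)
      obtain ⟨ym, hym_adj, hym_d⟩ := exists_pred hG (show G.dist r m = (n - 1) + 1 by omega)
      obtain ⟨yw, hyw_adj, hyw_d⟩ := exists_pred hG (show G.dist r w = (n - 1) + 1 by omega)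
      have hyc_mem : yc ∈ A₂ := by simp only [hA₂def, Set.mem_setOf_eq]; omega
      have hym_mem : ym ∈ A₂ := by simp only [hA₂def, Set.mem_setOf_eq]; omega
      have hyw_mem : yw ∈ A₂ := by simp only [hA₂def, Set.mem_setOf_eq]; omega
      -- level facts
      have hA₂_level : ∀ x ∈ A₂, G.dist r x < n := fun x hx => hx
      have hadj_level : ∀ {a b : V}, G.Adj a b → G.dist r a ≤ G.dist r b + 1 := by
        intro a b hab
        have ht := hG.dist_triangle (u := r) (v := b) (w := a)
        have : G.dist b a ≤ 1 := by
          have := dist_le (Walk.cons hab.symm Walk.nil); simpa using this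
        omega
      -- no edges between A₂ and U
      have hA₂U_nadj : ∀ u' ∈ A₂, ∀ v' ∈ U, ¬ G.Adj u' v' := by
        intro u' hu' v' hv' hadj
        have h1' := hA₂_level u' hu'
        have h2' := hU_level v' hv'
        have := hadj_level hadj.symm
        omega
      have hdisjA₂U : Disjoint A₂ U := Set.disjoint_left.mpr (fun {x} hx hx' => by
        have := hA₂_level x hx; have := hU_level x hx'; omega)
      have hnotinA₂ : ∀ z : V, G.dist r z = n → z ∉ A₂ := by
        intro z hz hmem; have := hA₂_level z hmem; omega
      have hnotinU : ∀ z : V, G.dist r z = n → z ∉ U := by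
        intro z hz hmem; have := hU_level z hmem; omega
      -- build the K_{2,3} induced minor
      apply hfree
      refine ⟨(fun z => match z with
        | .inl ⟨0, _⟩ => A₂
        | .inl ⟨_+1, _⟩ => U
        | .inr ⟨0, _⟩ => {c}
        | .inr ⟨1, _⟩ => {m}
        | .inr ⟨_+2, _⟩ => {w} : Fin 2 ⊕ Fin 3 → Set V), ?_, ?_, ?_, ?_⟩
      · rintro (⟨(_|iv), hi⟩ | ⟨(_|(_|jv)), hj⟩)
        · exact ⟨r, show G.dist r r < n by rw [SimpleGraph.dist_self]; omega⟩
        · exact ⟨s_c, hsc_mem⟩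
        · exact ⟨c, rfl⟩
        · exact ⟨m, rfl⟩
        · exact ⟨w, rfl⟩
      · rintro (⟨(_|iv), hi⟩ | ⟨(_|(_|jv)), hj⟩)
        · exact hA₂_conn
        · exact hU_conn
        · exact singleton_induce_connected G c
        · exact singleton_induce_connected G m
        · exact singleton_induce_connected G w
      · have hdcm : Disjoint ({c} : Set V) {m} := by
          rw [Set.disjoint_singleton]; exact fun h => hmc_ne h.symm
        have hdcw : Disjoint ({c} : Set V) {w} := by
          rw [Set.disjoint_singleton]; exact hcw_ne
        have hdmw : Disjoint ({m} : Set V) {w} := by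
          rw [Set.disjoint_singleton]; exact hmw_ne
        have hdA₂c : Disjoint A₂ ({c} : Set V) := by
          rw [Set.disjoint_singleton_right]; exact hnotinA₂ c hn.symm
        have hdA₂m : Disjoint A₂ ({m} : Set V) := by
          rw [Set.disjoint_singleton_right]; exact hnotinA₂ m hmln
        have hdA₂w : Disjoint A₂ ({w} : Set V) := by
          rw [Set.disjoint_singleton_right]; exact hnotinA₂ w hwln
        have hdUc : Disjoint U ({c} : Set V) := by
          rw [Set.disjoint_singleton_right]; exact hnotinU c hn.symm
        have hdUm : Disjoint U ({m} : Set V) := by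
          rw [Set.disjoint_singleton_right]; exact hnotinU m hmln
        have hdUw : Disjoint U ({w} : Set V) := by
          rw [Set.disjoint_singleton_right]; exact hnotinU w hwln
        rintro (⟨(_|iv), hi⟩ | ⟨(_|(_|jv)), hj⟩) (⟨(_|iv'), hi'⟩ | ⟨(_|(_|jv')), hj'⟩) hab
        · exact absurd rfl hab
        · exact hdisjA₂U
        · exact hdA₂c
        · exact hdA₂m
        · exact hdA₂w
        · exact hdisjA₂U.symm
        · have hiv : iv = iv' := by omega
          subst hiv; exact absurd rfl hab
        · exact hdUc
        · exact hdUm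
        · exact hdUw
        · exact hdA₂c.symm
        · exact hdUc.symm
        · exact absurd rfl hab
        · exact hdcm
        · exact hdcw
        · exact hdA₂m.symm
        · exact hdUm.symm
        · exact hdcm.symm
        · exact absurd rfl hab
        · exact hdmw
        · exact hdA₂w.symm
        · exact hdUw.symm
        · exact hdcw.symm
        · exact hdmw.symm
        · have hjv : jv = jv' := by omega
          subst hjv; exact absurd rfl hab
      · have hTcA : ∃ u' ∈ A₂, ∃ v' ∈ ({c} : Set V), G.Adj u' v' :=
          ⟨yc, hyc_mem, c, rfl, hyc_adj⟩
        have hTmA : ∃ u' ∈ A₂, ∃ v' ∈ ({m} : Set V), G.Adj u' v' :=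
          ⟨ym, hym_mem, m, rfl, hym_adj⟩
        have hTwA : ∃ u' ∈ A₂, ∃ v' ∈ ({w} : Set V), G.Adj u' v' :=
          ⟨yw, hyw_mem, w, rfl, hyw_adj⟩
        have hTcU : ∃ u' ∈ U, ∃ v' ∈ ({c} : Set V), G.Adj u' v' :=
          ⟨s_c, hsc_mem, c, rfl, hsc_adj.symm⟩
        have hTmU : ∃ u' ∈ U, ∃ v' ∈ ({m} : Set V), G.Adj u' v' :=
          ⟨s_m, hsm_mem, m, rfl, hsm_adj.symm⟩
        have hTwU : ∃ u' ∈ U, ∃ v' ∈ ({w} : Set V), G.Adj u' v' :=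
          ⟨s_w, hsw_mem, w, rfl, hsw_adj.symm⟩
        have hswap : ∀ {P Q : Set V}, (∃ u' ∈ P, ∃ v' ∈ Q, G.Adj u' v') →
            ∃ u' ∈ Q, ∃ v' ∈ P, G.Adj u' v' := by
          rintro P Q ⟨u', hu', v', hv', h⟩; exact ⟨v', hv', u', hu', h.symm⟩
        have hnAU : ¬ ∃ u' ∈ A₂, ∃ v' ∈ U, G.Adj u' v' := by
          rintro ⟨u', hu', v', hv', h⟩; exact hA₂U_nadj u' hu' v' hv' h
        have hnUA : ¬ ∃ u' ∈ U, ∃ v' ∈ A₂, G.Adj u' v' := fun h => hnAU (hswap h)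
        have hsing : ∀ {a' b' : V}, ¬ G.Adj a' b' →
            ¬ ∃ u' ∈ ({a'} : Set V), ∃ v' ∈ ({b'} : Set V), G.Adj u' v' := by
          rintro a' b' hn' ⟨u', rfl, v', rfl, h⟩; exact hn' h
        have hbipT : ∀ (i : Fin 2) (j : Fin 3),
            (completeBipartiteGraph (Fin 2) (Fin 3)).Adj (.inl i) (.inr j) ∧
            (completeBipartiteGraph (Fin 2) (Fin 3)).Adj (.inr j) (.inl i) := by
          intro i j; constructor <;> simp [completeBipartiteGraph]
        have hbipF1 : ∀ (i i' : Fin 2),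
            ¬ (completeBipartiteGraph (Fin 2) (Fin 3)).Adj (.inl i) (.inl i') := by
          intro i i'; simp [completeBipartiteGraph]
        have hbipF2 : ∀ (j j' : Fin 3),
            ¬ (completeBipartiteGraph (Fin 2) (Fin 3)).Adj (.inr j) (.inr j') := by
          intro j j'; simp [completeBipartiteGraph]
        rintro (⟨(_|iv), hi⟩ | ⟨(_|(_|jv)), hj⟩) (⟨(_|iv'), hi'⟩ | ⟨(_|(_|jv')), hj'⟩) hab
        · exact absurd rfl hab
        · exact iff_of_false (hbipF1 _ _) hnAU
        · exact iff_of_true (hbipT _ _).1 hTcA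
        · exact iff_of_true (hbipT _ _).1 hTmA
        · exact iff_of_true (hbipT _ _).1 hTwA
        · exact iff_of_false (hbipF1 _ _) hnUA
        · have hiv : iv = iv' := by omega
          subst hiv; exact absurd rfl hab
        · exact iff_of_true (hbipT _ _).1 hTcU
        · exact iff_of_true (hbipT _ _).1 hTmU
        · exact iff_of_true (hbipT _ _).1 hTwU
        · exact iff_of_true (hbipT _ _).2 (hswap hTcA)
        · exact iff_of_true (hbipT _ _).2 (hswap hTcU)
        · exact absurd rfl hab
        · exact iff_of_false (hbipF2 _ _) (hsing hmc_nadj)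
        · exact iff_of_false (hbipF2 _ _) (hsing hcw_nadj)
        · exact iff_of_true (hbipT _ _).2 (hswap hTmA)
        · exact iff_of_true (hbipT _ _).2 (hswap hTmU)
        · exact iff_of_false (hbipF2 _ _) (hsing (fun h => hmc_nadj h.symm))
        · exact absurd rfl hab
        · exact iff_of_false (hbipF2 _ _) (hsing hmw_nadj)
        · exact iff_of_true (hbipT _ _).2 (hswap hTwA)
        · exact iff_of_true (hbipT _ _).2 (hswap hTwU)
        · exact iff_of_false (hbipF2 _ _) (hsing (fun h => hcw_nadj h.symm))
        · exact iff_of_false (hbipF2 _ _) (hsing (fun h => hmw_nadj h.symm))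
        · have hjv : jv = jv' := by omega
          subst hjv; exact absurd rfl hab

/-- Distance bound for star edges of the algorithm. -/
lemma star_dist (hG : G.Connected) (hfree : K23Free G) {r : V} {k : ℕ} {S : Set V}
    (hS : IsCluster G r k S) {C : Set V} (hCP : C ⊆ parentSet G r k S)
    (hCconn : (G.induce C).Connected) {v w : V} (hw : w ∈ C)
    {c : V} (hcC : c ∈ C) (hadj : G.Adj v c) : G.dist v w ≤ 4 := by
  have h3 := key_lemma hG hfree hS hCP hCconn hcC hw
  have ht := hG.dist_triangle (u := v) (v := c) (w := w)
  have h1 : G.dist v c ≤ 1 := by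
    have := dist_le (Walk.cons hadj Walk.nil); simpa using this
  omega

lemma mem_starEdges_cases {w : V} {D : Set V} {x y : V} (h : s(x,y) ∈ starEdges w D) :
    (x ∈ D ∧ y = w) ∨ (y ∈ D ∧ x = w) := by
  obtain ⟨v, hv, he⟩ := h
  rw [Sym2.eq_iff] at he
  rcases he with ⟨h1, h2⟩ | ⟨h1, h2⟩
  · left; exact ⟨h1 ▸ hv, h2⟩
  · right; exact ⟨h2 ▸ hv, h1⟩

end Stmt12Aux

theorem stmt12 {V : Type} [Fintype V] (G : SimpleGraph V) (hG : G.Connected)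
    (hfree : K23Free G) (r : V) (H : SimpleGraph V) (hH : IsAlgoOutput G r H)
    (x y : V) (hxy : H.Adj x y) :
    G.dist x y ≤ 4 := by
  have hedge : s(x,y) ∈ H.edgeSet := hxy
  obtain ⟨f, hf, hE⟩ := hH
  rw [hE] at hedge
  simp only [Set.mem_iUnion, Set.mem_setOf_eq] at hedge
  obtain ⟨S, ⟨k, hk1, hclus⟩, hmem⟩ := hedge
  have hPC := hf S k hk1 hclus
  -- a vertex of S has a parent in the parent set
  have hparent : ∀ v ∈ S, ∃ c, c ∈ parentSet G r k S ∧ G.Adj v c := by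
    intro v hv
    have hdv : G.dist r v = k := hclus.2.1 v hv
    obtain ⟨c, hc_adj, hc_d⟩ := exists_pred hG (show G.dist r v = (k - 1) + 1 by omega)
    exact ⟨c, ⟨hc_d, v, hv, hc_adj⟩, hc_adj.symm⟩
  -- the star-edge finisher
  have finish : ∀ {C : Set V}, C ⊆ parentSet G r k S → (G.induce C).Connected →
      ∀ {v w : V}, v ∈ S → w ∈ C → (∃ c ∈ C, G.Adj v c) → G.dist v w ≤ 4 := by
    rintro C hCP hCconn v w hv hw ⟨c, hcC, hadj⟩
    exact star_dist hG hfree hclus hCP hCconn hw hcC hadj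
  have hDset : ∀ {C : Set V} {v : V}, v ∈ Dset G S C → v ∈ S ∧ ∃ c ∈ C, G.Adj v c :=
    fun h => ⟨h.1, h.2⟩
  have adj_dist : ∀ {a b : V}, G.Adj a b → G.dist a b ≤ 4 := by
    intro a b h
    have := dist_le (Walk.cons h Walk.nil)
    simp at this; omega
  rcases hPC with ⟨hPconn, w₀, hw₀P, hEe⟩ | ⟨C₁, C₂, hsplit, w₁, hw₁, w₂, hw₂, hcases⟩
  · rw [hEe] at hmem
    rcases mem_starEdges_cases hmem with ⟨hxS, rfl⟩ | ⟨hyS, rfl⟩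
    · obtain ⟨c, hcP, hadj⟩ := hparent x hxS
      exact finish (fun _ h => h) hPconn hxS hw₀P ⟨c, hcP, hadj⟩
    · rw [SimpleGraph.dist_comm]
      obtain ⟨c, hcP, hadj⟩ := hparent y hyS
      exact finish (fun _ h => h) hPconn hyS hw₀P ⟨c, hcP, hadj⟩
  · obtain ⟨hunion, hdisj, hne₁, hne₂, hconn₁, hconn₂, hnadj⟩ := hsplit
    have hC₁P : C₁ ⊆ parentSet G r k S := hunion ▸ Set.subset_union_left
    have hC₂P : C₂ ⊆ parentSet G r k S := hunion ▸ Set.subset_union_right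
    have star₁ : s(x,y) ∈ starEdges w₁ (Dset G S C₁) → G.dist x y ≤ 4 := by
      intro hmem'
      rcases mem_starEdges_cases hmem' with ⟨hxD, rfl⟩ | ⟨hyD, rfl⟩
      · exact finish hC₁P hconn₁ (hDset hxD).1 hw₁ (hDset hxD).2
      · rw [SimpleGraph.dist_comm]
        exact finish hC₁P hconn₁ (hDset hyD).1 hw₁ (hDset hyD).2
    have star₂ : ∀ {D : Set V}, D ⊆ Dset G S C₂ → s(x,y) ∈ starEdges w₂ D → G.dist x y ≤ 4 := by
      intro D hD hmem'
      rcases mem_starEdges_cases hmem' with ⟨hxD, rfl⟩ | ⟨hyD, rfl⟩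
      · exact finish hC₂P hconn₂ (hDset (hD hxD)).1 hw₂ (hDset (hD hxD)).2
      · rw [SimpleGraph.dist_comm]
        exact finish hC₂P hconn₂ (hDset (hD hyD)).1 hw₂ (hDset (hD hyD)).2
    rcases hcases with ⟨hinter, ⟨hnoadj, hEe⟩ | ⟨u, hu, v, hv, hadj, hEe⟩⟩ | ⟨hinter, u, hu, hEe⟩
    · rw [hEe] at hmem
      rcases hmem with hmem' | hmem'
      · exact star₁ hmem'
      · exact star₂ (fun _ h => h) hmem'
    · rw [hEe] at hmem
      rcases hmem with (hmem' | hmem') | hmem'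
      · exact star₁ hmem'
      · exact star₂ (fun _ h => h) hmem'
      · rw [Set.mem_singleton_iff, Sym2.eq_iff] at hmem'
        rcases hmem' with ⟨rfl, rfl⟩ | ⟨rfl, rfl⟩
        · exact adj_dist hadj
        · exact adj_dist hadj.symm
    · rw [hEe] at hmem
      rcases hmem with (hmem' | hmem') | hmem'
      · exact star₁ hmem'
      · exact star₂ Set.diff_subset hmem'
      · rw [Set.mem_singleton_iff, Sym2.eq_iff] at hmem'
        have huD₂ : u ∈ Dset G S C₂ := hu.2
        rcases hmem' with ⟨rfl, rfl⟩ | ⟨rfl, rfl⟩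
        · exact finish hC₂P hconn₂ (hDset huD₂).1 hw₂ (hDset huD₂).2
        · rw [SimpleGraph.dist_comm]
          exact finish hC₂P hconn₂ (hDset huD₂).1 hw₂ (hDset huD₂).2

end Paper
end
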